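/- Let t ≥ 0 and z > 0 be real numbers satisfying t ≤ z + log(1 + t). Then t ≤ √(2z) + G(z), where G(z) = (1 + √(2z))·(z + log(1 + √(2z)) − √(2z)) / √(2z). -/

import Mathlib

noncomputable section

/-- The auxiliary function `G` from the paper. -/
def Gfun (z : ℝ) : ℝ :=
  (1 + Real.sqrt (2 * z)) * (z + Real.log (1 + Real.sqrt (2 * z)) - Real.sqrt (2 * z)) /
    Real.sqrt (2 * z)

/-- If `t ≥ 0`, `z > 0` and `t ≤ z + log(1 + t)`, then `t ≤ √(2z) + G(z)`. -/
theorem le_sqrt_add_Gfun (t z : ℝ) (ht : 0 ≤ t) (hz : 0 < z)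
    (h : t ≤ z + Real.log (1 + t)) :
    t ≤ Real.sqrt (2 * z) + Gfun z := by
  set s := Real.sqrt (2 * z) with hs_def
  have hs : 0 < s := Real.sqrt_pos.2 (by linarith)
  have h1s : (0:ℝ) < 1 + s := by linarith
  have h1t : (0:ℝ) < 1 + t := by linarith
  set L := Real.log (1 + s) with hL_def
  have hlog : Real.log (1 + t) ≤ L + (t - s) / (1 + s) := by
    have h0 : Real.log ((1 + t) / (1 + s)) ≤ (1 + t) / (1 + s) - 1 :=
      Real.log_le_sub_one_of_pos (by positivity)
    rw [Real.log_div (by linarith) (by linarith)] at h0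
    have heq : (1 + t) / (1 + s) - 1 = (t - s) / (1 + s) := by field_simp; ring
    linarith [heq ▸ h0]
  have key : t * s ≤ (1 + s) * (z + L) - s := by
    have h2 : t ≤ z + L + (t - s) / (1 + s) := by linarith
    have h3 : (t - s) / (1 + s) * (1 + s) = t - s :=
      div_mul_cancel₀ _ (ne_of_gt h1s)
    nlinarith [mul_le_mul_of_nonneg_right h2 (le_of_lt h1s)]
  have goal_eq : s + Gfun z = ((1 + s) * (z + L) - s) / s := by
    rw [Gfun, ← hs_def, ← hL_def]
    field_simp
    ring
  rw [goal_eq, le_div_iff₀ hs]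
  linarith
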